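/- Let l ≥ 1 be an integer. Then for every n ∈ {1,…,l} one has |C_n| < 10(l+1). -/

import Mathlib

open Real Finset

/-- The constant `C_n` for `1 ≤ n ≤ l`. -/
noncomputable def Cc (l n : ℕ) : ℝ :=
  (2/((l : ℝ)+1)^2) * Real.sin (π*n/(l+1))^2 *
    ∑ m ∈ (Finset.Icc 1 l).filter (fun m => m ≠ n ∧ m % 2 = n % 2),
      Real.sin (π*m/(l+1))^2 / (Real.cos (π*m/(l+1)) - Real.cos (π*n/(l+1)))

lemma abs_sin_nat_mul_le (k : ℕ) (x : ℝ) : |Real.sin (k * x)| ≤ k * |Real.sin x| := by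
  induction k with
  | zero => simp
  | succ k ih =>
    have : ((k:ℝ)+1) * x = k * x + x := by ring
    push_cast
    rw [this, Real.sin_add]
    calc |Real.sin (k*x) * Real.cos x + Real.cos (k*x) * Real.sin x|
        ≤ |Real.sin (k*x) * Real.cos x| + |Real.cos (k*x) * Real.sin x| := abs_add_le _ _
      _ ≤ |Real.sin (k*x)| * 1 + 1 * |Real.sin x| := by
          rw [abs_mul, abs_mul]
          gcongr <;> [exact Real.abs_cos_le_one x; exact Real.abs_cos_le_one _]
      _ ≤ (k:ℝ) * |Real.sin x| + 1 * |Real.sin x| := by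
          rw [mul_one]
          gcongr
      _ = ((k:ℝ)+1) * |Real.sin x| := by ring

lemma abs_sin_eq_sin_abs (x : ℝ) (h : |x| ≤ π) : |Real.sin x| = Real.sin |x| := by
  rcases le_total 0 x with h0 | h0
  · rw [abs_of_nonneg h0]
    rw [abs_of_nonneg h0] at h
    exact abs_of_nonneg (Real.sin_nonneg_of_nonneg_of_le_pi h0 h)
  · rw [abs_of_nonpos h0]
    rw [abs_of_nonpos h0] at h
    rw [Real.sin_neg]
    have : Real.sin x ≤ 0 := Real.sin_nonpos_of_nonpos_of_neg_pi_le h0 (by linarith)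
    rw [abs_of_nonpos this]

lemma sin_div_le_sin (N k : ℕ) (hN : 2 ≤ N) (hk1 : 1 ≤ k) (hk2 : k ≤ N - 1) :
    Real.sin (π / N) ≤ Real.sin (π * k / N) := by
  have hNpos : (0:ℝ) < N := by positivity
  have hk2' : (k:ℝ) ≤ (N:ℝ) - 1 := by
    have : (k:ℝ) ≤ ((N-1 : ℕ) : ℝ) := by exact_mod_cast hk2
    rwa [Nat.cast_sub (by omega), Nat.cast_one] at this
  have hk1' : (1:ℝ) ≤ (k:ℝ) := by exact_mod_cast hk1
  have hend : π * ((N:ℝ)-1) / N = π - π / N := by field_simp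
  have hmem1 : π / N ∈ Set.Icc 0 π := by
    constructor
    · positivity
    · rw [div_le_iff₀ hNpos]
      nlinarith [Real.pi_pos]
  have hmem2 : π * ((N:ℝ)-1) / N ∈ Set.Icc 0 π := by
    rw [hend]
    constructor
    · have : π / N ≤ π := hmem1.2
      linarith
    · have : 0 ≤ π / N := hmem1.1
      linarith
  have h2 : (2:ℝ) ≤ N := by exact_mod_cast hN
  have hle : π / N ≤ π * ((N:ℝ)-1) / N := by
    rw [div_le_div_iff₀ hNpos hNpos]
    nlinarith [Real.pi_pos, mul_nonneg (mul_nonneg Real.pi_pos.le hNpos.le) (by linarith : (0:ℝ) ≤ (N:ℝ)-2)]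
  have hz : π * k / N ∈ segment ℝ (π / N) (π * ((N:ℝ)-1) / N) := by
    rw [segment_eq_Icc hle]
    constructor
    · rw [div_le_div_iff₀ hNpos hNpos]
      nlinarith [Real.pi_pos, mul_nonneg (mul_nonneg Real.pi_pos.le hNpos.le) (by linarith : (0:ℝ) ≤ (k:ℝ)-1)]
    · rw [div_le_div_iff₀ hNpos hNpos]
      nlinarith [Real.pi_pos, mul_nonneg (mul_nonneg Real.pi_pos.le hNpos.le) (by linarith : (0:ℝ) ≤ (N:ℝ)-1-(k:ℝ))]
  have := strictConcaveOn_sin_Icc.concaveOn.ge_on_segment hmem1 hmem2 hz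
  have heq : Real.sin (π * ((N:ℝ)-1) / N) = Real.sin (π / N) := by
    rw [hend, Real.sin_pi_sub]
  rw [heq, min_self] at this
  exact this

set_option maxHeartbeats 1000000 in
/-- `|C_n| < 10(l+1)` for every `n ∈ {1,…,l}`. -/
theorem stmt_13 (l : ℕ) (hl : 1 ≤ l) (n : ℕ) (hn : n ∈ Finset.Icc 1 l) :
    |Cc l n| < 10 * ((l : ℝ) + 1) := by
  obtain ⟨hn1, hnl⟩ := Finset.mem_Icc.mp hn
  set N : ℕ := l + 1 with hNdef
  have hN2 : 2 ≤ N := by omega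
  have hNR : ((l:ℝ) + 1) = (N:ℝ) := by push_cast [hNdef]; ring
  have hNpos : (0:ℝ) < N := by positivity
  have hs : 0 < Real.sin (π / N) := by
    apply Real.sin_pos_of_pos_of_lt_pi
    · positivity
    · rw [div_lt_iff₀ hNpos]
      have : (2:ℝ) ≤ N := by exact_mod_cast hN2
      nlinarith [Real.pi_pos]
  -- per-term bound
  set S := (Finset.Icc 1 l).filter (fun m => m ≠ n ∧ m % 2 = n % 2) with hS
  have hterm : ∀ m ∈ S,
      |Real.sin (π*m/(l+1))^2 / (Real.cos (π*m/(l+1)) - Real.cos (π*n/(l+1)))|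
        ≤ 1 / (2 * Real.sin (π / N)^2) := by
    intro m hm
    rw [hS, Finset.mem_filter, Finset.mem_Icc] at hm
    obtain ⟨⟨hm1, hml⟩, hmn, hpar⟩ := hm
    -- denominator lower bound
    have hden : 2 * Real.sin (π / N)^2 ≤
        |Real.cos (π*m/(l+1)) - Real.cos (π*n/(l+1))| := by
      rw [Real.cos_sub_cos]
      have hsum : (π*m/(l+1) + π*n/(l+1)) / 2 = π * ((m+n)/2 : ℕ) / N := by
        have he : 2 ∣ m + n := by omega
        obtain ⟨p, hp⟩ := he
        rw [hp]
        have hpc : ((2*p/2 : ℕ) : ℝ) = (p:ℝ) := by norm_num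
        have hmn' : (m:ℝ) + (n:ℝ) = 2*p := by exact_mod_cast hp
        rw [hpc]
        calc (π*m/(l+1) + π*n/(l+1)) / 2 = π*((m:ℝ)+(n:ℝ))/(2*(N:ℝ)) := by rw [hNR]; ring
          _ = 2*(π*(p:ℝ))/(2*(N:ℝ)) := by rw [hmn']; ring
          _ = π*(p:ℝ)/(N:ℝ) := mul_div_mul_left _ _ two_ne_zero
      have hdiff : (π*m/(l+1) - π*n/(l+1)) / 2 = π * ((m:ℝ)-(n:ℝ)) / (2*N) := by
        rw [hNR]; ring
      rw [hsum, hdiff]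
      have h1 : Real.sin (π / N) ≤ Real.sin (π * ((m+n)/2 : ℕ) / N) := by
        apply sin_div_le_sin N _ hN2
        · omega
        · omega
      have h2 : Real.sin (π / N) ≤ |Real.sin (π * ((m:ℝ)-(n:ℝ)) / (2*N))| := by
        set q : ℕ := (max m n - min m n) / 2 with hq
        have hql : 1 ≤ q := by omega
        have hqu : q ≤ N - 1 := by omega
        have habs : |π * ((m:ℝ)-(n:ℝ)) / (2*N)| = π * q / N := by
          rw [abs_div, abs_mul, abs_of_nonneg Real.pi_pos.le, abs_of_nonneg (by positivity : (0:ℝ) ≤ 2*(N:ℝ))]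
          have : |(m:ℝ) - (n:ℝ)| = 2 * q := by
            rcases le_total m n with h | h
            · have h2 : n - m = 2 * q := by omega
              have h3 : (n:ℝ) - (m:ℝ) = 2*(q:ℝ) := by
                rw [← Nat.cast_sub h]; exact_mod_cast h2
              rw [abs_of_nonpos (sub_nonpos.mpr ((Nat.cast_le (α := ℝ)).mpr h))]
              linarith
            · have h2 : m - n = 2 * q := by omega
              have h3 : (m:ℝ) - (n:ℝ) = 2*(q:ℝ) := by
                rw [← Nat.cast_sub h]; exact_mod_cast h2
              rw [abs_of_nonneg (sub_nonneg.mpr ((Nat.cast_le (α := ℝ)).mpr h))]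
              linarith
          rw [this]
          field_simp
        have hbound : |π * ((m:ℝ)-(n:ℝ)) / (2*N)| ≤ π := by
          rw [habs]
          rw [div_le_iff₀ hNpos]
          have : (q:ℝ) ≤ N := by exact_mod_cast (by omega : q ≤ N)
          nlinarith [Real.pi_pos]
        rw [abs_sin_eq_sin_abs _ hbound, habs]
        exact sin_div_le_sin N q hN2 hql hqu
      calc 2 * Real.sin (π / N)^2
          = 2 * Real.sin (π/N) * Real.sin (π/N) := by ring
        _ ≤ 2 * |Real.sin (π * ((m+n)/2 : ℕ) / N)| * |Real.sin (π * ((m:ℝ)-(n:ℝ)) / (2*N))| := by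
            have h1' : Real.sin (π/N) ≤ |Real.sin (π * ((m+n)/2 : ℕ) / N)| :=
              le_trans h1 (le_abs_self _)
            exact mul_le_mul (mul_le_mul_of_nonneg_left h1' (by norm_num)) h2 hs.le (by positivity)
        _ = |(-2) * Real.sin (π * ((m+n)/2 : ℕ) / N) * Real.sin (π * ((m:ℝ)-(n:ℝ)) / (2*N))| := by
            rw [abs_mul, abs_mul]
            norm_num
    have hdenne : Real.cos (π*m/(l+1)) - Real.cos (π*n/(l+1)) ≠ 0 := by
      intro h
      rw [h, abs_zero] at hden
      nlinarith [hs]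
    rw [abs_div]
    rw [div_le_div_iff₀ (by positivity) (by positivity)]
    have hsle : |Real.sin (π*m/(l+1))^2| ≤ 1 := by
      rw [abs_sq]
      nlinarith [Real.neg_one_le_sin (π*m/(l+1)), Real.sin_le_one (π*m/(l+1))]
    exact mul_le_mul hsle hden (by positivity) zero_le_one
  -- now bound the whole thing
  have hsumbound : |∑ m ∈ S, Real.sin (π*m/(l+1))^2 / (Real.cos (π*m/(l+1)) - Real.cos (π*n/(l+1)))|
      ≤ S.card * (1 / (2 * Real.sin (π / N)^2)) := by
    calc |∑ m ∈ S, _| ≤ ∑ m ∈ S, |Real.sin (π*m/(l+1))^2 / (Real.cos (π*m/(l+1)) - Real.cos (π*n/(l+1)))| :=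
          Finset.abs_sum_le_sum_abs _ _
      _ ≤ ∑ m ∈ S, (1 / (2 * Real.sin (π / N)^2)) := Finset.sum_le_sum hterm
      _ = S.card * (1 / (2 * Real.sin (π / N)^2)) := by rw [Finset.sum_const, nsmul_eq_mul]
  have hsinn : Real.sin (π*n/(l+1))^2 ≤ (n:ℝ)^2 * Real.sin (π/N)^2 := by
    have h := abs_sin_nat_mul_le n (π / N)
    have harg : π * n / (l+1) = n * (π / N) := by rw [hNR]; ring
    rw [harg]
    have : |Real.sin ((n:ℝ) * (π/N))|^2 ≤ ((n:ℝ) * |Real.sin (π/N)|)^2 := by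
      apply sq_le_sq'
      · nlinarith [abs_nonneg (Real.sin ((n:ℝ)*(π/N)))]
      · exact h
    rw [sq_abs] at this
    calc Real.sin ((n:ℝ)*(π/N))^2 ≤ ((n:ℝ) * |Real.sin (π/N)|)^2 := this
      _ = (n:ℝ)^2 * Real.sin (π/N)^2 := by rw [mul_pow, sq_abs]
  have hcard : (S.card : ℝ) ≤ l := by
    have : S.card ≤ (Finset.Icc 1 l).card := Finset.card_filter_le _ _
    rw [Nat.card_Icc] at this
    exact_mod_cast by omega
  have hnN : (n:ℝ) ≤ (l:ℝ) := by exact_mod_cast hnl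
  have hfinal : |Cc l n| ≤ (n:ℝ)^2 * S.card / ((N:ℝ))^2 := by
    rw [Cc, abs_mul, abs_mul]
    rw [← hS]
    have h1 : |2/((l : ℝ)+1)^2| = 2/((N:ℝ))^2 := by
      rw [hNR, abs_of_pos (by positivity)]
    have h2 : |Real.sin (π*n/(l+1))^2| = Real.sin (π*n/(l+1))^2 := abs_sq _
    rw [h1, h2]
    calc 2/((N:ℝ))^2 * Real.sin (π*n/(l+1))^2 * |∑ m ∈ S, _|
        ≤ 2/((N:ℝ))^2 * ((n:ℝ)^2 * Real.sin (π/N)^2) * (S.card * (1 / (2 * Real.sin (π / N)^2))) := by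
          apply mul_le_mul
          · apply mul_le_mul_of_nonneg_left hsinn (by positivity)
          · exact hsumbound
          · exact abs_nonneg _
          · positivity
      _ = (n:ℝ)^2 * S.card / ((N:ℝ))^2 := by
          field_simp
  have hNl : ((N:ℝ)) = (l:ℝ) + 1 := hNR.symm
  have hl1 : (1:ℝ) ≤ (l:ℝ) := by exact_mod_cast hl
  have hnn : (0:ℝ) ≤ (n:ℝ) := Nat.cast_nonneg n
  have h1 : (n:ℝ)^2 * S.card ≤ (l:ℝ)^2 * (l:ℝ) :=
    mul_le_mul (by nlinarith) hcard (Nat.cast_nonneg _) (by positivity)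
  calc |Cc l n| ≤ (n:ℝ)^2 * S.card / ((N:ℝ))^2 := hfinal
    _ < 10 * ((l : ℝ) + 1) := by
        rw [div_lt_iff₀ (by positivity), hNl]
        nlinarith
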